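/- For integers 0 ≤ m ≤ n, m is an ancestor of n (i.e., m ∈ 𝒜(n), equivalently mrca(m,n) = m) if and only if L(n−m)∘ϑ^m = 0, i.e., if and only if S(m) = min_{m ≤ j ≤ n} S(j). -/

import Mathlib

open scoped Classical NNReal
noncomputable section

/-- Finite point measures on `(0,∞)`, modeled as multisets of atoms in `ℝ≥0`. -/
abbrev PtM := Multiset ℝ≥0

/-- A stick: a life-length together with a finite point measure of birth times. -/
abbrev Stick := ℝ≥0 × PtM

/-- The space of doubly infinite sequences of sticks. -/
abbrev Om := ℤ → Stick

/-- The shift operator `θ_n`. -/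
def theta (n : ℤ) (ω : Om) : Om := fun k => ω (n + k)

/-- The dual (time-reversal) operator `ϑ^n`. -/
def dual (n : ℤ) (ω : Om) : Om := fun k => ω (n - k - 1)

/-- Life length of the `k`-th individual. -/
def Vc (ω : Om) (k : ℤ) : ℝ≥0 := (ω k).1

/-- Point measure (ages at childbearing) of the `k`-th individual. -/
def Pc (ω : Om) (k : ℤ) : PtM := (ω k).2

/-- The Lukasiewicz path `S`. -/
def Sw (ω : Om) (n : ℤ) : ℤ :=
  if 0 ≤ n then ∑ k ∈ Finset.range n.toNat, ((Multiset.card (Pc ω (k : ℤ)) : ℤ) - 1)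
  else - ∑ k ∈ Finset.range (-n).toNat, ((Multiset.card (Pc ω (-(k : ℤ) - 1)) : ℤ) - 1)

/-- `π(ν)`: the supremum of the support (largest atom) of a finite point measure. -/
def piM (ν : PtM) : ℝ≥0 := ν.sup

/-- `Υ_j(ν)`: removes the `j` largest atoms of `ν`. -/
def upsilon (j : ℕ) (ν : PtM) : PtM :=
  ((ν.sort (· ≤ ·)).take (Multiset.card ν - j) : List ℝ≥0)

/-- The map `Φ` driving the spine process dynamics. -/
def phiSp (Y : List PtM) (ν : PtM) : List PtM :=
  if ν = 0 then
    match Y.reverse.dropWhile (fun m => decide (Multiset.card m < 2)) with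
    | [] => []
    | h :: t => (upsilon 1 h :: t).reverse
  else Y ++ [ν]

/-- The spine process `𝕊₀ⁿ`. -/
def spine (ω : Om) : ℕ → List PtM
  | 0 => []
  | n + 1 => phiSp (spine ω n) (Pc ω (n : ℤ))

/-- `π` extended to finite sequences of point measures. -/
def piL (Y : List PtM) : ℝ≥0 := (Y.map piM).sum

/-- The chronological height process `ℍ(n) = π(𝕊₀ⁿ)`. -/
def Hchr (ω : Om) (n : ℕ) : ℝ≥0 := piL (spine ω n)

/-- The genealogical height process
`𝓗(n) = #{k ∈ {0,…,n−1} : S(k+1) ≤ min_{k+1 ≤ j ≤ n} S(j)}`. -/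
def genH (ω : Om) (n : ℕ) : ℕ :=
  ((Finset.range n).filter
    (fun k : ℕ => ∀ j : ℕ, j ∈ Finset.Icc (k + 1) n → Sw ω ((k : ℤ) + 1) ≤ Sw ω (j : ℤ))).card

/-- Weak ascending ladder height times `T(k)` (valued `⊤` if nonexistent). -/
def ladderT (ω : Om) : ℕ → ℕ∞
  | 0 => 0
  | k + 1 => sInf {x : ℕ∞ | ∃ m j : ℕ, x = (m : ℕ∞) ∧ ladderT ω k = (j : ℕ∞) ∧
      j < m ∧ Sw ω (j : ℤ) ≤ Sw ω (m : ℤ)}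

/-- `T^{-1}(n) = min{k ≥ 0 : T(k) ≥ n}`. -/
def Tinv (ω : Om) (n : ℕ) : ℕ := sInf {k : ℕ | (n : ℕ∞) ≤ ladderT ω k}

/-- `T̃^{-1}(n) = max{k ≥ 0 : T(k) ≤ n}`. -/
def tildeTinv (ω : Om) (n : ℕ) : ℕ := sSup {k : ℕ | ladderT ω k ≤ (n : ℕ∞)}

/-- First passage time upward `τ_ℓ = inf{k > 0 : S(k) ≥ ℓ}`. -/
def tauUp (ω : Om) (ℓ : ℤ) : ℕ∞ :=
  sInf {x : ℕ∞ | ∃ k : ℕ, x = (k : ℕ∞) ∧ 0 < k ∧ ℓ ≤ Sw ω (k : ℤ)}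

/-- First hitting time downward `τ⁻_ℓ = inf{k ≥ 0 : S(k) = −ℓ}`. -/
def tauDown (ω : Om) (ℓ : ℤ) : ℕ∞ :=
  sInf {x : ℕ∞ | ∃ k : ℕ, x = (k : ℕ∞) ∧ Sw ω (k : ℤ) = -ℓ}

/-- `τ_ℓ` as a natural number (junk value `0` when infinite). -/
def tauUpN (ω : Om) (ℓ : ℤ) : ℕ := (tauUp ω ℓ).toNat

/-- The undershoot `ζ_ℓ = ℓ − S(τ_ℓ − 1)`. -/
def zetaU (ω : Om) (ℓ : ℤ) : ℤ := ℓ - Sw ω ((tauUpN ω ℓ : ℤ) - 1)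

/-- `μ_ℓ = Υ_{ζ_ℓ}(𝒫_{τ_ℓ − 1})`. -/
def muU (ω : Om) (ℓ : ℤ) : PtM := upsilon (zetaU ω ℓ).toNat (Pc ω ((tauUpN ω ℓ : ℤ) - 1))

/-- `𝒬(k) = μ₀ ∘ θ_{T(k−1)}`. -/
def Qcal (ω : Om) (k : ℕ) : PtM := muU (theta ((ladderT ω (k - 1)).toNat : ℤ) ω) 0

/-- `𝕐(k) = π(𝒬(k))`. -/
def Ybb (ω : Om) (k : ℕ) : ℝ≥0 := piM (Qcal ω k)

/-- The backward maximum `L(m) = max_{0 ≤ k ≤ m} S(−k)`. -/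
def Lmax (ω : Om) (m : ℕ) : ℤ :=
  Finset.sup' (Finset.range (m + 1)) Finset.nonempty_range_add_one (fun k => Sw ω (-(k : ℤ)))

/-- The ancestor set `𝒜(n) = {n − T(k)∘ϑ^n : k ≥ 0}` (only finite ladder times). -/
def Aset (ω : Om) (n : ℕ) : Set ℤ :=
  {a | ∃ k j : ℕ, ladderT (dual (n : ℤ) ω) k = (j : ℕ∞) ∧ a = (n : ℤ) - (j : ℤ)}

/-- `mrca(m,n) = max(𝒜(m) ∩ 𝒜(n))`. -/
def mrcaZ (ω : Om) (m n : ℕ) : ℤ := sSup (Aset ω m ∩ Aset ω n)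

/-- `χ(m,k) = inf{j ≥ m+1 : S(j) = S(m+1) − k}`. -/
def chiT (ω : Om) (m k : ℕ) : ℕ∞ :=
  sInf {x : ℕ∞ | ∃ j : ℕ, x = (j : ℕ∞) ∧ m + 1 ≤ j ∧
    Sw ω (j : ℤ) = Sw ω ((m : ℤ) + 1) - (k : ℤ)}

/-- `χ(m) = inf{j ≥ m+1 : S(j) = S(m) − 1}`. -/
def chiF (ω : Om) (m : ℕ) : ℕ∞ :=
  sInf {x : ℕ∞ | ∃ j : ℕ, x = (j : ℕ∞) ∧ m + 1 ≤ j ∧ Sw ω (j : ℤ) = Sw ω (m : ℤ) - 1}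

/-- The functional `D_ℓ(𝕊₀^m)` of the spine, expressed through the dual walk:
`D_ℓ = (Σ_{i : 0 < T(i) ≤ min(τ_ℓ, m)} 𝕐(i) − 1_{τ_ℓ ≤ m} π(μ_ℓ)) ∘ ϑ^m`, with `D_0 ≡ 0`. -/
def Dfun (ω : Om) (m : ℕ) (ℓ : ℤ) : ℝ :=
  if ℓ < 1 then 0 else
    (∑ i ∈ (Finset.Icc 1 m).filter
        (fun i => 0 < ladderT (dual (m : ℤ) ω) i ∧
          ladderT (dual (m : ℤ) ω) i ≤ min (tauUp (dual (m : ℤ) ω) ℓ) (m : ℕ∞)),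
      (Ybb (dual (m : ℤ) ω) i : ℝ))
    - (if tauUp (dual (m : ℤ) ω) ℓ ≤ (m : ℕ∞) then (piM (muU (dual (m : ℤ) ω) ℓ) : ℝ) else 0)

/-- `K_j = 2𝒱(j−1) − ℍ(j)`. -/
def Kt (ω : Om) (j : ℕ) : ℝ := 2 * ∑ k ∈ Finset.range j, (Vc ω (k : ℤ) : ℝ) - (Hchr ω j : ℝ)

/-- The chronological contour process: on `[K_n, K_{n+1}]` it increases at rate `+1` from
`ℍ(n)` up to `ℍ(n) + V_n` and then decreases at rate `−1` down to `ℍ(n+1)`. -/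
def contour (ω : Om) (t : ℝ) : ℝ :=
  let n := sSup {j : ℕ | Kt ω j ≤ t}
  min ((Hchr ω n : ℝ) + (t - Kt ω n)) ((Hchr ω (n + 1) : ℝ) + (Kt ω (n + 1) - t))


def gW (ω : Om) (a : ℤ) : ℤ := (Multiset.card (Pc ω a) : ℤ) - 1

lemma Sw_succ (ω : Om) (a : ℤ) : Sw ω (a + 1) = Sw ω a + gW ω a := by
  rcases le_or_gt 0 a with ha | ha
  · obtain ⟨p, rfl⟩ := Int.eq_ofNat_of_zero_le ha
    simp only [Sw, gW]
    rw [if_pos (by positivity), if_pos ha]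
    have : ((p:ℤ)+1).toNat = p + 1 := by omega
    rw [this, Int.toNat_natCast, Finset.sum_range_succ]
  · obtain ⟨p, hp⟩ : ∃ p : ℕ, a = -(p:ℤ) - 1 := ⟨(-(a+1)).toNat, by omega⟩
    subst hp
    rcases Nat.eq_zero_or_pos p with rfl | hp
    · simp only [Sw, gW]
      norm_num
    · simp only [Sw, gW]
      rw [if_neg (by omega), if_neg (by omega)]
      have h1 : (-(-(p:ℤ) - 1 + 1)).toNat = p := by omega
      have h2 : (-(-(p:ℤ) - 1)).toNat = p + 1 := by omega
      rw [h1, h2, Finset.sum_range_succ]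
      simp only [gW, Pc]
      ring

lemma Sw_add (ω : Om) (a : ℤ) (j : ℕ) :
    Sw ω (a + j) = Sw ω a + ∑ k ∈ Finset.range j, gW ω (a + k) := by
  induction j with
  | zero => simp
  | succ j ih =>
    have : a + ((j:ℤ)+1) = (a + j) + 1 := by ring
    push_cast
    rw [this, Sw_succ, ih, Finset.sum_range_succ]
    push_cast
    ring

lemma Sw_zero (ω : Om) : Sw ω 0 = 0 := by simp [Sw]

lemma gW_dual (ω : Om) (n k : ℤ) : gW (dual n ω) k = gW ω (n - k - 1) := rfl

lemma Sw_dual (ω : Om) (n j : ℤ) : Sw (dual n ω) j = Sw ω n - Sw ω (n - j) := by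
  rcases le_or_gt 0 j with hj | hj
  · obtain ⟨p, rfl⟩ := Int.eq_ofNat_of_zero_le hj
    have h1 := Sw_add (dual n ω) 0 p
    have h2 := Sw_add ω (n - p) p
    rw [zero_add, Sw_zero, zero_add] at h1
    have h3 : ∑ k ∈ Finset.range p, gW (dual n ω) (0+(k:ℤ))
        = ∑ k ∈ Finset.range p, gW ω ((n-p)+k) := by
      rw [← Finset.sum_range_reflect (fun k => gW ω ((n-(p:ℤ))+k)) p]
      refine Finset.sum_congr rfl fun k hk => ?_
      simp only [Finset.mem_range] at hk
      rw [gW_dual]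
      congr 1
      have : ((p - 1 - k : ℕ) : ℤ) = (p:ℤ) - 1 - k := by omega
      rw [this]; ring
    rw [h3] at h1
    have h4 : (n - (p:ℤ)) + (p:ℤ) = n := by ring
    rw [h4] at h2
    omega
  · obtain ⟨p, rfl⟩ : ∃ p : ℕ, j = -(p:ℤ) := ⟨(-j).toNat, by omega⟩
    have h1 := Sw_add (dual n ω) (-(p:ℤ)) p
    have h2 := Sw_add ω n p
    have h0 : (-(p:ℤ)) + p = 0 := by ring
    rw [h0, Sw_zero] at h1
    have h3 : ∑ k ∈ Finset.range p, gW (dual n ω) (-(p:ℤ)+k)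
        = ∑ k ∈ Finset.range p, gW ω (n+k) := by
      rw [← Finset.sum_range_reflect (fun k => gW ω (n+k)) p]
      refine Finset.sum_congr rfl fun k hk => ?_
      simp only [Finset.mem_range] at hk
      rw [gW_dual]
      congr 1
      have : ((p - 1 - k : ℕ) : ℤ) = (p:ℤ) - 1 - k := by omega
      rw [this]; ring
    rw [h3] at h1
    have : n - -(p:ℤ) = n + p := by ring
    rw [this]
    omega

lemma ladderT_succ_eq (ω : Om) (k j' : ℕ) (hk : ladderT ω k = (j' : ℕ∞))
    (h : ∃ m : ℕ, j' < m ∧ Sw ω (j':ℤ) ≤ Sw ω (m:ℤ)) :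
    ladderT ω (k+1) = (Nat.find h : ℕ∞) := by
  rw [ladderT]
  apply le_antisymm
  · exact sInf_le ⟨Nat.find h, j', rfl, hk, (Nat.find_spec h).1, (Nat.find_spec h).2⟩
  · refine le_sInf ?_
    rintro x ⟨m, j, rfl, hj, hlt, hle⟩
    have hjj : j = j' := by rw [hk] at hj; exact_mod_cast hj.symm
    subst hjj
    exact_mod_cast Nat.find_min' h ⟨hlt, hle⟩

lemma ladderT_succ_top (ω : Om) (k j' : ℕ) (hk : ladderT ω k = (j' : ℕ∞))
    (h : ¬ ∃ m : ℕ, j' < m ∧ Sw ω (j':ℤ) ≤ Sw ω (m:ℤ)) :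
    ladderT ω (k+1) = ⊤ := by
  rw [ladderT]
  rw [sInf_eq_top]
  rintro x ⟨m, j, rfl, hj, hlt, hle⟩
  exfalso
  have hjj : j = j' := by rw [hk] at hj; exact_mod_cast hj.symm
  subst hjj
  exact h ⟨m, hlt, hle⟩

lemma ladderT_top_succ (ω : Om) (k : ℕ) (hk : ladderT ω k = ⊤) :
    ladderT ω (k+1) = ⊤ := by
  rw [ladderT, sInf_eq_top]
  rintro x ⟨m, j, rfl, hj, hlt, hle⟩
  rw [hk] at hj
  exact absurd hj.symm (ENat.coe_ne_top j)

lemma record_of_ladder (ω : Om) : ∀ k j : ℕ, ladderT ω k = (j : ℕ∞) →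
    ∀ i : ℕ, i ≤ j → Sw ω (i:ℤ) ≤ Sw ω (j:ℤ) := by
  intro k
  induction k with
  | zero =>
    intro j hj i hi
    have hj0 : j = 0 := by
      have : ((0:ℕ) : ℕ∞) = (j : ℕ∞) := by simpa [ladderT] using hj
      exact_mod_cast this.symm
    subst hj0
    interval_cases i
    exact le_refl _
  | succ k ih =>
    intro j hj i hi
    obtain ⟨j', hj'⟩ : ∃ j' : ℕ, ladderT ω k = (j' : ℕ∞) := by
      rcases eq_top_or_lt_top (ladderT ω k) with ht | hlt
      · exfalso
        have := ladderT_top_succ ω k ht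
        rw [hj] at this
        exact ENat.coe_ne_top j this
      · exact ⟨(ladderT ω k).toNat, (ENat.coe_toNat hlt.ne).symm⟩
    by_cases hex : ∃ m : ℕ, j' < m ∧ Sw ω (j':ℤ) ≤ Sw ω (m:ℤ)
    · have hfind : (Nat.find hex : ℕ∞) = (j : ℕ∞) := by
        rw [← ladderT_succ_eq ω k j' hj' hex, hj]
      have hfj : Nat.find hex = j := by exact_mod_cast hfind
      rcases le_or_gt i j' with h1 | h1
      · exact le_trans (ih j' hj' i h1) (hfj ▸ (Nat.find_spec hex).2)
      · rcases eq_or_lt_of_le hi with rfl | h2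
        · exact le_refl _
        · have h3 := Nat.find_min hex (hfj ▸ h2)
          have h4 : ¬ Sw ω (j':ℤ) ≤ Sw ω (i:ℤ) := fun hc => h3 ⟨h1, hc⟩
          exact le_trans (not_le.1 h4).le (hfj ▸ (Nat.find_spec hex).2)
    · exfalso
      have := ladderT_succ_top ω k j' hj' hex
      rw [hj] at this
      exact ENat.coe_ne_top j this

lemma ladder_of_record (ω : Om) : ∀ j : ℕ, (∀ i : ℕ, i ≤ j → Sw ω (i:ℤ) ≤ Sw ω (j:ℤ)) →
    ∃ k, ladderT ω k = (j : ℕ∞) := by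
  intro j
  induction j using Nat.strong_induction_on with
  | _ j IH =>
  intro hrec
  rcases Nat.eq_zero_or_pos j with rfl | hjpos
  · exact ⟨0, by simp [ladderT]⟩
  · set P : ℕ → Prop := fun i => ∀ i' ≤ i, Sw ω (i':ℤ) ≤ Sw ω (i:ℤ) with hP
    have hP0 : P 0 := by
      intro i' hi'
      interval_cases i'
      exact le_refl _
    set j' := Nat.findGreatest P (j-1) with hj'def
    have hj' : P j' := Nat.findGreatest_spec (Nat.zero_le _) hP0
    have hj'le : j' ≤ j - 1 := Nat.findGreatest_le _
    obtain ⟨k, hk⟩ := IH j' (by omega) hj'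
    have hpj : j' < j ∧ Sw ω (j':ℤ) ≤ Sw ω (j:ℤ) := ⟨by omega, hrec j' (by omega)⟩
    have hex : ∃ m, j' < m ∧ Sw ω (j':ℤ) ≤ Sw ω (m:ℤ) := ⟨j, hpj⟩
    have hfind : Nat.find hex = j := by
      have hle : Nat.find hex ≤ j := Nat.find_min' hex hpj
      rcases eq_or_lt_of_le hle with h | h
      · exact h
      · exfalso
        have hm := Nat.find_spec hex
        have hmrec : P (Nat.find hex) := by
          intro i' hi'
          rcases le_or_gt i' j' with h1 | h1
          · exact le_trans (hj' i' h1) hm.2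
          · rcases eq_or_lt_of_le hi' with rfl | h2
            · exact le_refl _
            · have h3 := Nat.find_min hex h2
              have h4 : ¬ Sw ω (j':ℤ) ≤ Sw ω (i':ℤ) := fun hc => h3 ⟨h1, hc⟩
              exact le_trans (not_le.1 h4).le hm.2
        have h5 : Nat.find hex ≤ j - 1 := by omega
        have h6 := Nat.le_findGreatest h5 hmrec
        omega
    exact ⟨k+1, by rw [ladderT_succ_eq ω k j' hk hex, hfind]⟩

theorem stmt7 (ω : Om) (m n : ℕ) (hmn : m ≤ n) :
    (((m : ℤ) ∈ Aset ω n) ↔ Lmax (dual (m : ℤ) ω) (n - m) = 0) ∧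
    (Lmax (dual (m : ℤ) ω) (n - m) = 0 ↔
      Sw ω (m : ℤ)
        = Finset.inf' (Finset.Icc m n) (Finset.nonempty_Icc.2 hmn) (fun j => Sw ω (j : ℤ))) := by
  have hterm : ∀ k : ℕ, Sw (dual (m:ℤ) ω) (-(k:ℤ)) = Sw ω (m:ℤ) - Sw ω ((m:ℤ) + k) := by
    intro k
    rw [Sw_dual]
    congr 2
    ring
  have hQiff1 : ((m : ℤ) ∈ Aset ω n) ↔
      (∀ j : ℕ, m ≤ j → j ≤ n → Sw ω (m:ℤ) ≤ Sw ω (j:ℤ)) := by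
    simp only [Aset, Set.mem_setOf_eq]
    constructor
    · rintro ⟨k, j, hkj, hm⟩ j₀ hmj₀ hj₀n
      have hjval : j = n - m := by omega
      subst hjval
      have hrec := record_of_ladder (dual (n:ℤ) ω) k (n-m) hkj
      have h1 := hrec (n - j₀) (by omega)
      rw [Sw_dual, Sw_dual] at h1
      have e1 : (n:ℤ) - ((n - j₀ : ℕ):ℤ) = (j₀:ℤ) := by omega
      have e2 : (n:ℤ) - ((n - m : ℕ):ℤ) = (m:ℤ) := by omega
      rw [e1, e2] at h1
      omega
    · intro hQ
      have hrec : ∀ i : ℕ, i ≤ n - m →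
          Sw (dual (n:ℤ) ω) (i:ℤ) ≤ Sw (dual (n:ℤ) ω) ((n-m : ℕ):ℤ) := by
        intro i hi
        rw [Sw_dual, Sw_dual]
        have e1 : (n:ℤ) - (i:ℤ) = ((n - i : ℕ):ℤ) := by omega
        have e2 : (n:ℤ) - ((n - m : ℕ):ℤ) = (m:ℤ) := by omega
        rw [e1, e2]
        have := hQ (n - i) (by omega) (by omega)
        omega
      obtain ⟨k, hk⟩ := ladder_of_record (dual (n:ℤ) ω) (n-m) hrec
      exact ⟨k, n - m, hk, by omega⟩
  have hQiff2 : Lmax (dual (m:ℤ) ω) (n - m) = 0 ↔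
      (∀ j : ℕ, m ≤ j → j ≤ n → Sw ω (m:ℤ) ≤ Sw ω (j:ℤ)) := by
    unfold Lmax
    constructor
    · intro h j hmj hjn
      have hk : j - m ∈ Finset.range (n - m + 1) := by
        simp only [Finset.mem_range]; omega
      have h2 := Finset.le_sup' (fun k : ℕ => Sw (dual (m:ℤ) ω) (-(k:ℤ))) hk
      rw [h] at h2
      simp only [hterm] at h2
      have e : (m:ℤ) + ((j - m : ℕ):ℤ) = (j:ℤ) := by omega
      rw [e] at h2
      omega
    · intro hQ
      apply le_antisymm
      · apply Finset.sup'_le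
        intro k hk
        simp only [Finset.mem_range] at hk
        rw [hterm]
        have := hQ (m + k) (by omega) (by omega)
        push_cast at this
        omega
      · have h0 : (0:ℕ) ∈ Finset.range (n - m + 1) := by simp
        have h2 := Finset.le_sup' (fun k : ℕ => Sw (dual (m:ℤ) ω) (-(k:ℤ))) h0
        have h3 : Sw (dual (m:ℤ) ω) (-((0:ℕ):ℤ)) = 0 := by
          rw [hterm]; push_cast; ring
        simpa only [h3] using h2
  have hQiff3 : (Sw ω (m:ℤ)
        = Finset.inf' (Finset.Icc m n) (Finset.nonempty_Icc.2 hmn) (fun j => Sw ω (j:ℤ))) ↔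
      (∀ j : ℕ, m ≤ j → j ≤ n → Sw ω (m:ℤ) ≤ Sw ω (j:ℤ)) := by
    constructor
    · intro h j hmj hjn
      rw [h]
      exact Finset.inf'_le _ (by simp only [Finset.mem_Icc]; omega)
    · intro hQ
      apply le_antisymm
      · apply Finset.le_inf'
        intro j hj
        simp only [Finset.mem_Icc] at hj
        exact hQ j hj.1 hj.2
      · exact Finset.inf'_le _ (Finset.mem_Icc.mpr ⟨le_refl m, hmn⟩)
  exact ⟨hQiff1.trans hQiff2.symm, hQiff2.trans hQiff3.symm⟩


end
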